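/- Let n, k ≥ 1 be integers with k odd, and let G = K_k + (2nk+1)K_1 be the graph consisting of a clique on k vertices u_1,…,u_k each joined to 2nk+1 independent vertices v_1,…,v_{2nk+1} (no edges among the v_i). Then G contains no H_n-factor. -/

import Mathlib

open SimpleGraph

/-- `F` is an `Hₙ`-factor of `G`: a spanning subgraph in which every vertex has
degree in `{1, 3, 5, …, 2n-1, 2n}`. -/
def IsHnFactor (n : ℕ) {V : Type*} (G F : SimpleGraph V) : Prop :=
  F ≤ G ∧ ∀ v : V,
    (Odd ((F.neighborSet v).ncard) ∧ (F.neighborSet v).ncard ≤ 2 * n - 1) ∨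
      (F.neighborSet v).ncard = 2 * n

/-- The number of odd components (connected components of odd order) of a graph. -/
noncomputable def oddComponentCount {V : Type*} (G : SimpleGraph V) : ℕ :=
  Nat.card {c : G.ConnectedComponent // Odd (Nat.card c.supp)}

/-- The graph `K_k + (2nk+1)K₁`: a clique on `k` vertices (the left summands),
each joined to `2nk+1` independent vertices (the right summands). -/
def CliquePlusInd (n k : ℕ) : SimpleGraph (Fin k ⊕ Fin (2 * n * k + 1)) :=
  SimpleGraph.fromRel (fun a b => a.isLeft)

theorem stmt_5 (n k : ℕ) (hn : 1 ≤ n) (hk : 1 ≤ k) (hkodd : Odd k) :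
    ¬ ∃ F, IsHnFactor n (CliquePlusInd n k) F := by
  rintro ⟨F, hle, hdeg⟩
  classical
  have hcard : ∀ v, (F.neighborSet v).ncard = (F.neighborFinset v).card := by
    intro v
    rw [SimpleGraph.neighborFinset_def, Set.ncard_eq_toFinset_card']
  have hub : ∀ v, (F.neighborFinset v).card ≤ 2 * n := by
    intro v
    rcases hdeg v with ⟨_, h⟩ | h <;> rw [hcard v] at h <;> omega
  have hlb : ∀ v, 1 ≤ (F.neighborFinset v).card := by
    intro v
    rcases hdeg v with ⟨h, _⟩ | h <;> rw [hcard v] at h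
    · exact h.pos
    · omega
  have hnr : ∀ j j', ¬ F.Adj (Sum.inr j) (Sum.inr j') := by
    intro j j' h
    have := hle h
    simp [CliquePlusInd, SimpleGraph.fromRel_adj] at this
  have key1 : ∀ j : Fin (2 * n * k + 1),
      1 ≤ (Finset.univ.filter fun i : Fin k => F.Adj (Sum.inl i) (Sum.inr j)).card := by
    intro j
    obtain ⟨w, hw⟩ := Finset.card_pos.mp (hlb (Sum.inr j))
    rw [SimpleGraph.mem_neighborFinset] at hw
    rcases w with i | j'
    · exact Finset.card_pos.mpr ⟨i, Finset.mem_filter.mpr ⟨Finset.mem_univ i, hw.symm⟩⟩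
    · exact absurd hw (hnr j j')
  have key2 : ∀ i : Fin k,
      (Finset.univ.filter fun j : Fin (2 * n * k + 1) => F.Adj (Sum.inl i) (Sum.inr j)).card
        ≤ 2 * n := by
    intro i
    refine le_trans ?_ (hub (Sum.inl i))
    apply Finset.card_le_card_of_injOn (fun j => Sum.inr j)
    · intro j hj
      simp only [Finset.mem_coe, Finset.mem_filter] at hj
      exact (SimpleGraph.mem_neighborFinset _ _ _).mpr hj.2
    · intro a _ b _ h
      exact Sum.inr.inj h
  have heq : (∑ i : Fin k,
        (Finset.univ.filter fun j : Fin (2 * n * k + 1) => F.Adj (Sum.inl i) (Sum.inr j)).card)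
      = ∑ j : Fin (2 * n * k + 1),
        (Finset.univ.filter fun i : Fin k => F.Adj (Sum.inl i) (Sum.inr j)).card := by
    simp only [Finset.card_filter]
    exact Finset.sum_comm
  have h1 : 2 * n * k + 1 ≤ ∑ j : Fin (2 * n * k + 1),
      (Finset.univ.filter fun i : Fin k => F.Adj (Sum.inl i) (Sum.inr j)).card := by
    calc 2 * n * k + 1 = ∑ _j : Fin (2 * n * k + 1), 1 := by simp
    _ ≤ _ := Finset.sum_le_sum fun j _ => key1 j
  have h2 : (∑ i : Fin k,
      (Finset.univ.filter fun j : Fin (2 * n * k + 1) => F.Adj (Sum.inl i) (Sum.inr j)).card)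
      ≤ 2 * n * k := by
    calc _ ≤ ∑ _i : Fin k, 2 * n := Finset.sum_le_sum fun i _ => key2 i
    _ = 2 * n * k := by simp [mul_comm]
  omega
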